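/- Let a > 1/2 and for u ∈ (1-a, a-1) set g(u) = (1/(π√(a² - u²))) · log( (a² - u² + u + √(a² - (u-1)²)·√(a² - u²)) / (a² - u² - u + √(a² - (u+1)²)·√(a² - u²)) ). Then g(u) < 0 for u ∈ (1-a, 0) and g(u) > 0 for u ∈ (0, a-1). -/
import Mathlib


open Real

lemma sign_of_g_aux (a u : ℝ) (h1 : 1 - a < u) (h2 : u < a - 1) :
    0 < a ^ 2 - u ^ 2 ∧
    0 < a ^ 2 - u ^ 2 + u + Real.sqrt (a ^ 2 - (u - 1) ^ 2) * Real.sqrt (a ^ 2 - u ^ 2) ∧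
    0 < a ^ 2 - u ^ 2 - u + Real.sqrt (a ^ 2 - (u + 1) ^ 2) * Real.sqrt (a ^ 2 - u ^ 2) := by
  have ha : 1 < a := by linarith
  have hs : 0 < a ^ 2 - u ^ 2 := by nlinarith
  have hN : 0 < a ^ 2 - u ^ 2 + u := by nlinarith
  have hD : 0 < a ^ 2 - u ^ 2 - u := by nlinarith
  have hY : (0:ℝ) ≤ Real.sqrt (a ^ 2 - (u - 1) ^ 2) * Real.sqrt (a ^ 2 - u ^ 2) :=
    mul_nonneg (Real.sqrt_nonneg _) (Real.sqrt_nonneg _)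
  have hX : (0:ℝ) ≤ Real.sqrt (a ^ 2 - (u + 1) ^ 2) * Real.sqrt (a ^ 2 - u ^ 2) :=
    mul_nonneg (Real.sqrt_nonneg _) (Real.sqrt_nonneg _)
  exact ⟨hs, by linarith, by linarith⟩

/-- Sign of the explicit formula for `f'(u)` on `(1-a, a-1)`. -/
theorem sign_of_g (a : ℝ) (ha : 1 / 2 < a) :
    (∀ u ∈ Set.Ioo (1 - a) (0:ℝ),
      (1 / (π * Real.sqrt (a ^ 2 - u ^ 2))) *
        Real.log ((a ^ 2 - u ^ 2 + u +
            Real.sqrt (a ^ 2 - (u - 1) ^ 2) * Real.sqrt (a ^ 2 - u ^ 2)) /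
          (a ^ 2 - u ^ 2 - u +
            Real.sqrt (a ^ 2 - (u + 1) ^ 2) * Real.sqrt (a ^ 2 - u ^ 2))) < 0) ∧
    (∀ u ∈ Set.Ioo (0:ℝ) (a - 1),
      0 < (1 / (π * Real.sqrt (a ^ 2 - u ^ 2))) *
        Real.log ((a ^ 2 - u ^ 2 + u +
            Real.sqrt (a ^ 2 - (u - 1) ^ 2) * Real.sqrt (a ^ 2 - u ^ 2)) /
          (a ^ 2 - u ^ 2 - u +
            Real.sqrt (a ^ 2 - (u + 1) ^ 2) * Real.sqrt (a ^ 2 - u ^ 2)))) := by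
  constructor
  · rintro u ⟨hu1, hu2⟩
    have ha1 : 1 < a := by linarith
    have hu2' : u < a - 1 := by linarith
    obtain ⟨hs, hN, hD⟩ := sign_of_g_aux a u hu1 hu2'
    have hsqrt : 0 < Real.sqrt (a ^ 2 - u ^ 2) := Real.sqrt_pos.mpr hs
    have hpre : 0 < 1 / (π * Real.sqrt (a ^ 2 - u ^ 2)) :=
      one_div_pos.mpr (mul_pos Real.pi_pos hsqrt)
    -- compare the square roots: Y = a²-(u-1)² < X = a²-(u+1)² since u < 0
    have hlt : Real.sqrt (a ^ 2 - (u - 1) ^ 2) < Real.sqrt (a ^ 2 - (u + 1) ^ 2) := by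
      apply Real.sqrt_lt_sqrt (by nlinarith) (by nlinarith)
    have hND : (a ^ 2 - u ^ 2 + u +
        Real.sqrt (a ^ 2 - (u - 1) ^ 2) * Real.sqrt (a ^ 2 - u ^ 2)) <
        (a ^ 2 - u ^ 2 - u +
        Real.sqrt (a ^ 2 - (u + 1) ^ 2) * Real.sqrt (a ^ 2 - u ^ 2)) := by
      nlinarith
    have hlog : Real.log ((a ^ 2 - u ^ 2 + u +
        Real.sqrt (a ^ 2 - (u - 1) ^ 2) * Real.sqrt (a ^ 2 - u ^ 2)) /
        (a ^ 2 - u ^ 2 - u +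
        Real.sqrt (a ^ 2 - (u + 1) ^ 2) * Real.sqrt (a ^ 2 - u ^ 2))) < 0 :=
      Real.log_neg (div_pos hN hD) ((div_lt_one hD).mpr hND)
    exact mul_neg_of_pos_of_neg hpre hlog
  · rintro u ⟨hu1, hu2⟩
    have ha1 : 1 < a := by linarith
    have hu1' : 1 - a < u := by linarith
    obtain ⟨hs, hN, hD⟩ := sign_of_g_aux a u hu1' hu2
    have hsqrt : 0 < Real.sqrt (a ^ 2 - u ^ 2) := Real.sqrt_pos.mpr hs
    have hpre : 0 < 1 / (π * Real.sqrt (a ^ 2 - u ^ 2)) :=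
      one_div_pos.mpr (mul_pos Real.pi_pos hsqrt)
    have hlt : Real.sqrt (a ^ 2 - (u + 1) ^ 2) < Real.sqrt (a ^ 2 - (u - 1) ^ 2) := by
      apply Real.sqrt_lt_sqrt (by nlinarith) (by nlinarith)
    have hND : (a ^ 2 - u ^ 2 - u +
        Real.sqrt (a ^ 2 - (u + 1) ^ 2) * Real.sqrt (a ^ 2 - u ^ 2)) <
        (a ^ 2 - u ^ 2 + u +
        Real.sqrt (a ^ 2 - (u - 1) ^ 2) * Real.sqrt (a ^ 2 - u ^ 2)) := by
      nlinarith
    have hlog : 0 < Real.log ((a ^ 2 - u ^ 2 + u +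
        Real.sqrt (a ^ 2 - (u - 1) ^ 2) * Real.sqrt (a ^ 2 - u ^ 2)) /
        (a ^ 2 - u ^ 2 - u +
        Real.sqrt (a ^ 2 - (u + 1) ^ 2) * Real.sqrt (a ^ 2 - u ^ 2))) :=
      Real.log_pos ((one_lt_div hD).mpr hND)
    exact mul_pos hpre hlog
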